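/- Let Z_t ≥ 0 be a random variable whose Laplace transform is E[e^{uZ_t}] = exp(Δ(u)) for u ≤ 0, where Δ(u) = ∫₀^t ∫_{(0,∞)}(e^{ξue^{-as}/(1-(σ²/(2a))(1-e^{-as})u)} - 1) ν(dξ) ds and ∫_{(0,∞)} ξ ν(dξ) < ∞. Then E[Z_t] ≤ ((1-e^{-at})/a) ∫_{(0,∞)} ξ ν(dξ) < ∞. -/

import Mathlib

open MeasureTheory ENNReal

private lemma jcir_inner_bound (a σ : ℝ) (ha : 0 < a) (hσ : 0 < σ) (ν : Measure ℝ)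
    (hI : IntegrableOn (fun ξ => ξ) (Set.Ioi (0:ℝ)) ν) (u s : ℝ) (hu : u < 0) (hs : 0 < s) :
    u * Real.exp (-a * s) * (∫ ξ in Set.Ioi (0:ℝ), ξ ∂ν) ≤
      ∫ ξ in Set.Ioi (0:ℝ),
        (Real.exp (ξ * u * Real.exp (-a * s) /
          (1 - σ ^ 2 / (2 * a) * (1 - Real.exp (-a * s)) * u)) - 1) ∂ν := by
  have hexp1 : Real.exp (-a * s) ≤ 1 := Real.exp_le_one_iff.2 (by nlinarith)
  have hexp0 : 0 < Real.exp (-a * s) := Real.exp_pos _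
  have hc : 0 ≤ σ ^ 2 / (2 * a) := by positivity
  have hD1 : 1 ≤ 1 - σ ^ 2 / (2 * a) * (1 - Real.exp (-a * s)) * u := by
    have h2 : σ ^ 2 / (2 * a) * (1 - Real.exp (-a * s)) * u ≤ 0 :=
      mul_nonpos_of_nonneg_of_nonpos (mul_nonneg hc (by linarith)) hu.le
    linarith
  have key : ∀ ξ ∈ Set.Ioi (0:ℝ),
      -(Real.exp (ξ * u * Real.exp (-a * s) /
          (1 - σ ^ 2 / (2 * a) * (1 - Real.exp (-a * s)) * u)) - 1)
        ≤ ξ * (-(u * Real.exp (-a * s))) := by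
    intro ξ hξ
    have hξ0 : (0:ℝ) < ξ := hξ
    set D := 1 - σ ^ 2 / (2 * a) * (1 - Real.exp (-a * s)) * u with hDdef
    have hD0 : 0 < D := lt_of_lt_of_le one_pos hD1
    have hx : ξ * u * Real.exp (-a * s) ≤ 0 :=
      mul_nonpos_of_nonpos_of_nonneg (mul_nonpos_of_nonneg_of_nonpos hξ0.le hu.le) hexp0.le
    have hwle : ξ * u * Real.exp (-a * s) ≤ ξ * u * Real.exp (-a * s) / D := by
      rw [le_div_iff₀ hD0]; nlinarith
    have h1 := Real.add_one_le_exp (ξ * u * Real.exp (-a * s) / D)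
    nlinarith
  have hg : Integrable (fun ξ => ξ * (-(u * Real.exp (-a * s)))) (ν.restrict (Set.Ioi 0)) :=
    hI.mul_const _
  have hnn : ∀ ξ ∈ Set.Ioi (0:ℝ),
      0 ≤ -(Real.exp (ξ * u * Real.exp (-a * s) /
          (1 - σ ^ 2 / (2 * a) * (1 - Real.exp (-a * s)) * u)) - 1) := by
    intro ξ hξ
    have hξ0 : (0:ℝ) < ξ := hξ
    have hD0 : (0:ℝ) < 1 - σ ^ 2 / (2 * a) * (1 - Real.exp (-a * s)) * u :=
      lt_of_lt_of_le one_pos hD1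
    have hwle : ξ * u * Real.exp (-a * s) / (1 - σ ^ 2 / (2 * a) * (1 - Real.exp (-a * s)) * u) ≤ 0 :=
      div_nonpos_of_nonpos_of_nonneg
        (mul_nonpos_of_nonpos_of_nonneg (mul_nonpos_of_nonneg_of_nonpos hξ0.le hu.le) hexp0.le)
        hD0.le
    have := Real.exp_le_one_iff.2 hwle
    linarith
  have hmono := integral_mono_of_nonneg
    ((ae_restrict_iff' measurableSet_Ioi).2 (Filter.Eventually.of_forall hnn))
    hg
    ((ae_restrict_iff' measurableSet_Ioi).2 (Filter.Eventually.of_forall key))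
  rw [integral_neg, integral_mul_const] at hmono
  linarith

private lemma jcir_inner_nonpos (a σ : ℝ) (ha : 0 < a) (hσ : 0 < σ) (ν : Measure ℝ)
    (u s : ℝ) (hu : u < 0) (hs : 0 < s) :
    ∫ ξ in Set.Ioi (0:ℝ), (Real.exp (ξ * u * Real.exp (-a * s) /
      (1 - σ ^ 2 / (2 * a) * (1 - Real.exp (-a * s)) * u)) - 1) ∂ν ≤ 0 := by
  refine setIntegral_nonpos measurableSet_Ioi fun ξ hξ => ?_
  have hξ0 : (0:ℝ) < ξ := hξ
  have hexp1 : Real.exp (-a * s) ≤ 1 := Real.exp_le_one_iff.2 (by nlinarith)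
  have hexp0 : 0 < Real.exp (-a * s) := Real.exp_pos _
  have hc : 0 ≤ σ ^ 2 / (2 * a) := by positivity
  have hD1 : 1 ≤ 1 - σ ^ 2 / (2 * a) * (1 - Real.exp (-a * s)) * u := by
    have h2 : σ ^ 2 / (2 * a) * (1 - Real.exp (-a * s)) * u ≤ 0 :=
      mul_nonpos_of_nonneg_of_nonpos (mul_nonneg hc (by linarith)) hu.le
    linarith
  have hw : ξ * u * Real.exp (-a * s) /
      (1 - σ ^ 2 / (2 * a) * (1 - Real.exp (-a * s)) * u) ≤ 0 :=
    div_nonpos_of_nonpos_of_nonneg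
      (mul_nonpos_of_nonpos_of_nonneg (mul_nonpos_of_nonneg_of_nonpos hξ0.le hu.le) hexp0.le)
      (by linarith)
  have := Real.exp_le_one_iff.2 hw
  linarith

private lemma exp_integral_Ioo (a t : ℝ) (ha : 0 < a) (ht : 0 < t) :
    ∫ s in Set.Ioo (0:ℝ) t, Real.exp (-a * s) = (1 - Real.exp (-a * t)) / a := by
  rw [← integral_Ioc_eq_integral_Ioo, ← intervalIntegral.integral_of_le ht.le]
  have h := intervalIntegral.integral_comp_mul_left Real.exp (neg_ne_zero.2 ha.ne')
    (a := (0:ℝ)) (b := t)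
  rw [h, integral_exp]
  simp only [mul_zero, Real.exp_zero, smul_eq_mul]
  have haa : a * a⁻¹ = 1 := mul_inv_cancel₀ ha.ne'
  field_simp
  linear_combination

private lemma jcir_Delta_ge (a σ t : ℝ) (ha : 0 < a) (hσ : 0 < σ) (ht : 0 < t) (ν : Measure ℝ)
    (hI : IntegrableOn (fun ξ => ξ) (Set.Ioi (0:ℝ)) ν) (u : ℝ) (hu : u < 0) :
    u * ((1 - Real.exp (-a * t)) / a * ∫ ξ in Set.Ioi (0:ℝ), ξ ∂ν) ≤
      ∫ s in Set.Ioo (0:ℝ) t, ∫ ξ in Set.Ioi (0:ℝ), (Real.exp (ξ * u * Real.exp (-a * s) /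
          (1 - σ ^ 2 / (2 * a) * (1 - Real.exp (-a * s)) * u)) - 1) ∂ν := by
  set I := ∫ ξ in Set.Ioi (0:ℝ), ξ ∂ν with hIdef
  have hInn : 0 ≤ I := setIntegral_nonneg measurableSet_Ioi fun ξ hξ => (le_of_lt hξ)
  have hg : IntegrableOn (fun s => Real.exp (-a * s) * (-u * I)) (Set.Ioo 0 t) volume :=
    ((Real.continuous_exp.comp (continuous_const.mul continuous_id)).mul
      continuous_const).integrableOn_Icc.mono_set Set.Ioo_subset_Icc_self
  have hmono := integral_mono_of_nonneg
    (f := fun s => -(∫ ξ in Set.Ioi (0:ℝ), (Real.exp (ξ * u * Real.exp (-a * s) /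
          (1 - σ ^ 2 / (2 * a) * (1 - Real.exp (-a * s)) * u)) - 1) ∂ν))
    (μ := volume.restrict (Set.Ioo 0 t))
    ((ae_restrict_iff' measurableSet_Ioo).2 (Filter.Eventually.of_forall fun s hs => by
      simpa using jcir_inner_nonpos a σ ha hσ ν u s hu hs.1))
    hg
    ((ae_restrict_iff' measurableSet_Ioo).2 (Filter.Eventually.of_forall fun s hs => by
      have := jcir_inner_bound a σ ha hσ ν hI u s hu hs.1
      rw [← hIdef] at this
      nlinarith [this]))
  rw [integral_neg, integral_mul_const, exp_integral_Ioo a t ha ht] at hmono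
  nlinarith [hmono]

/-- If `Z_t ≥ 0` has Laplace transform `E[e^{uZ_t}] = exp(Δ(u))` for `u ≤ 0` with `Δ` as in
the JCIR pure-jump part and `∫ ξ ν(dξ) < ∞`, then
`E[Z_t] ≤ ((1-e^{-at})/a) ∫ ξ ν(dξ) < ∞`. -/
theorem expectation_Z_bound (a σ t : ℝ) (ha : 0 < a) (hσ : 0 < σ) (ht : 0 < t)
    (ν : Measure ℝ)
    (hν : ∫⁻ ξ in Set.Ioi (0 : ℝ), ENNReal.ofReal ξ ∂ν < ⊤)
    {Ω : Type*} [MeasureSpace Ω] [IsProbabilityMeasure (volume : Measure Ω)]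
    (Z : Ω → ℝ) (hZmeas : Measurable Z) (hZpos : ∀ ω, 0 ≤ Z ω)
    (hlaplace : ∀ u : ℝ, u ≤ 0 →
      ∫ ω, Real.exp (u * Z ω) =
        Real.exp (∫ s in Set.Ioo (0 : ℝ) t, ∫ ξ in Set.Ioi (0 : ℝ),
          (Real.exp (ξ * u * Real.exp (-a * s) /
            (1 - σ ^ 2 / (2 * a) * (1 - Real.exp (-a * s)) * u)) - 1) ∂ν)) :
    ∫⁻ ω, ENNReal.ofReal (Z ω) ≤
      ENNReal.ofReal ((1 - Real.exp (-a * t)) / a * ∫ ξ in Set.Ioi (0 : ℝ), ξ ∂ν) := by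
  -- integrability of ξ on (0,∞)
  have hI : IntegrableOn (fun ξ => ξ) (Set.Ioi (0:ℝ)) ν := by
    refine ⟨measurable_id.aestronglyMeasurable, ?_⟩
    rw [HasFiniteIntegral]
    refine lt_of_le_of_lt (le_of_eq (lintegral_congr_ae ?_)) hν
    refine (ae_restrict_iff' measurableSet_Ioi).2 (Filter.Eventually.of_forall fun ξ hξ => ?_)
    exact Real.enorm_eq_ofReal (le_of_lt hξ)
  set I := ∫ ξ in Set.Ioi (0:ℝ), ξ ∂ν with hIdef
  have hInn : 0 ≤ I := setIntegral_nonneg measurableSet_Ioi fun ξ hξ => le_of_lt hξ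
  set C := (1 - Real.exp (-a * t)) / a * I with hCdef
  have hC0 : 0 ≤ C := by
    have h1 : Real.exp (-a * t) ≤ 1 := Real.exp_le_one_iff.2 (by nlinarith)
    exact mul_nonneg (div_nonneg (by linarith) ha.le) hInn
  -- approximating sequence
  set v : ℕ → ℝ := fun n => 1 / (n + 1) with hvdef
  have hv0 : ∀ n, 0 < v n := fun n => by positivity
  set f : ℕ → Ω → ℝ := fun n ω => (1 - Real.exp (-(v n) * Z ω)) / v n with hfdef
  have hfnn : ∀ n ω, 0 ≤ f n ω := by
    intro n ω
    have h1 : Real.exp (-(v n) * Z ω) ≤ 1 :=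
      Real.exp_le_one_iff.2 (mul_nonpos_of_nonpos_of_nonneg (by linarith [hv0 n]) (hZpos ω))
    exact div_nonneg (by linarith) (hv0 n).le
  -- pointwise convergence
  have hlim : ∀ ω, Filter.Tendsto (fun n => f n ω) Filter.atTop (nhds (Z ω)) := by
    intro ω
    have hd : HasDerivAt (fun x : ℝ => 1 - Real.exp (-x * Z ω)) (Z ω) 0 := by
      have h1 : HasDerivAt (fun x : ℝ => -x * Z ω) (-(Z ω)) 0 := by
        simpa using ((hasDerivAt_id (0:ℝ)).neg.mul_const (Z ω))
      have h2 := h1.exp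
      have h3 := h2.const_sub 1
      simpa using h3
    have hslope := hasDerivAt_iff_tendsto_slope.1 hd
    have hvt : Filter.Tendsto v Filter.atTop (nhdsWithin 0 {(0:ℝ)}ᶜ) := by
      apply tendsto_nhdsWithin_of_tendsto_nhds_of_eventually_within
      · exact tendsto_one_div_add_atTop_nhds_zero_nat
      · exact Filter.Eventually.of_forall fun n => (hv0 n).ne'
    refine (hslope.comp hvt).congr fun n => ?_
    show slope (fun x : ℝ => 1 - Real.exp (-x * Z ω)) 0 (v n) = f n ω
    rw [slope_def_field]
    simp [hfdef, div_eq_mul_inv]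
  -- the uniform bound
  have hbound : ∀ n, ∫⁻ ω, ENNReal.ofReal (f n ω) ≤ ENNReal.ofReal C := by
    intro n
    have hu0 : -(v n) < 0 := neg_neg_iff_pos.2 (hv0 n)
    have hexpint : Integrable (fun ω => Real.exp (-(v n) * Z ω)) volume := by
      refine Integrable.mono' (integrable_const 1)
        ((Real.measurable_exp.comp (measurable_const.mul hZmeas)).aestronglyMeasurable) ?_
      refine Filter.Eventually.of_forall fun ω => ?_
      rw [Real.norm_eq_abs, abs_of_pos (Real.exp_pos _)]
      exact Real.exp_le_one_iff.2 (mul_nonpos_of_nonpos_of_nonneg hu0.le (hZpos ω))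
    have hfint : Integrable (f n) volume := by
      rw [hfdef]
      exact ((integrable_const 1).sub hexpint).div_const _
    rw [← ofReal_integral_eq_lintegral_ofReal hfint
      (Filter.Eventually.of_forall fun ω => hfnn n ω)]
    apply ENNReal.ofReal_le_ofReal
    have hint : ∫ ω, f n ω = (1 - ∫ ω, Real.exp (-(v n) * Z ω)) / v n := by
      rw [hfdef]
      rw [integral_div, integral_sub (integrable_const 1) hexpint, integral_const]
      simp
    have hΔ := jcir_Delta_ge a σ t ha hσ ht ν hI (-(v n)) hu0
    rw [← hIdef, ← hCdef] at hΔ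
    rw [hint, hlaplace (-(v n)) hu0.le]
    set Δ := ∫ s in Set.Ioo (0 : ℝ) t, ∫ ξ in Set.Ioi (0 : ℝ),
          (Real.exp (ξ * -(v n) * Real.exp (-a * s) /
            (1 - σ ^ 2 / (2 * a) * (1 - Real.exp (-a * s)) * -(v n))) - 1) ∂ν with hΔdef
    have h1 : Δ + 1 ≤ Real.exp Δ := Real.add_one_le_exp Δ
    rw [div_le_iff₀ (hv0 n)]
    nlinarith [h1, hΔ]
  -- conclude via Fatou
  calc ∫⁻ ω, ENNReal.ofReal (Z ω)
      = ∫⁻ ω, Filter.liminf (fun n => ENNReal.ofReal (f n ω)) Filter.atTop := by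
        refine lintegral_congr fun ω => ?_
        exact ((ENNReal.continuous_ofReal.tendsto _).comp (hlim ω)).liminf_eq.symm
    _ ≤ Filter.liminf (fun n => ∫⁻ ω, ENNReal.ofReal (f n ω)) Filter.atTop := by
        refine lintegral_liminf_le fun n => ?_
        exact ENNReal.measurable_ofReal.comp
          ((measurable_const.sub
            (Real.measurable_exp.comp (measurable_const.mul hZmeas))).div_const _)
    _ ≤ ENNReal.ofReal C := by
        refine le_trans (Filter.liminf_le_liminf (Filter.Eventually.of_forall hbound)) ?_
        simp [Filter.liminf_const]
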